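/- For any connected dominating set S of the n × m grid with m, n ≥ 4 and no corner vertex in S, letting l be the number of leaves of G[S], one has ℓ(S) + e(S) ≥ 2|S| + 2l − 2. -/

import Mathlib

open Finset

/-- The infinite grid graph on `ℤ × ℤ`: two points are adjacent iff their
Manhattan distance is `1`. -/
def GridZ : SimpleGraph (ℤ × ℤ) where
  Adj u v := |u.1 - v.1| + |u.2 - v.2| = 1
  symm := by
    constructor
    intro u v h
    rw [abs_sub_comm v.1 u.1, abs_sub_comm v.2 u.2]
    exact h
  loopless := by
    constructor
    intro u h
    simp at h

/-- The vertex set `[1,n] × [1,m]` of the `n × m` grid graph `G_{n,m}`. -/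
def box (n m : ℕ) : Set (ℤ × ℤ) :=
  {p | 1 ≤ p.1 ∧ p.1 ≤ (n : ℤ) ∧ 1 ≤ p.2 ∧ p.2 ≤ (m : ℤ)}

instance (n m : ℕ) (p : ℤ × ℤ) : Decidable (p ∈ box n m) :=
  inferInstanceAs (Decidable (1 ≤ p.1 ∧ p.1 ≤ (n : ℤ) ∧ 1 ≤ p.2 ∧ p.2 ≤ (m : ℤ)))

/-- `S` is a connected dominating set of the grid `G_{n,m}`:
`S ⊆ [1,n] × [1,m]`, the induced subgraph on `S` is connected, and every
vertex of the grid is in `S` or adjacent to a vertex of `S`. -/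
def IsCDS (n m : ℕ) (S : Finset (ℤ × ℤ)) : Prop :=
  (S : Set (ℤ × ℤ)) ⊆ box n m ∧
    (GridZ.induce (S : Set (ℤ × ℤ))).Connected ∧
    ∀ v ∈ box n m, ∃ u ∈ S, u = v ∨ GridZ.Adj u v

/-- The closed neighbourhood of a vertex in the (enlarged) grid. -/
def closedNbr (v : ℤ × ℤ) : Finset (ℤ × ℤ) :=
  {v, (v.1 + 1, v.2), (v.1 - 1, v.2), (v.1, v.2 + 1), (v.1, v.2 - 1)}

/-- The closed neighbourhood `N_{G'}[S]` of `S` in the enlarged grid `G'`. -/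
def closedN (S : Finset (ℤ × ℤ)) : Finset (ℤ × ℤ) :=
  S.biUnion closedNbr

/-- The loss function `ℓ(S) = Σ_{v ∈ N_{G'}[S]} (|N_{G'}[v] ∩ S| - 1)`. -/
def loss (S : Finset (ℤ × ℤ)) : ℕ :=
  ∑ v ∈ closedN S, ((closedNbr v ∩ S).card - 1)

/-- The boundary of `G_{n,m}`: vertices of the grid with degree at most 3. -/
def boundary (n m : ℕ) : Set (ℤ × ℤ) :=
  {p | p ∈ box n m ∧ (((closedNbr p).erase p).filter (· ∈ box n m)).card ≤ 3}

instance (n m : ℕ) (p : ℤ × ℤ) : Decidable (p ∈ boundary n m) :=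
  inferInstanceAs
    (Decidable (p ∈ box n m ∧ (((closedNbr p).erase p).filter (· ∈ box n m)).card ≤ 3))

/-- The excess `e(S)`: the number of points of `S` on the boundary of the grid. -/
def excess (n m : ℕ) (S : Finset (ℤ × ℤ)) : ℕ :=
  (S.filter (fun p => p ∈ boundary n m)).card

/-- The four corners of `G_{n,m}`. -/
def corners (n m : ℕ) : Set (ℤ × ℤ) :=
  {((1 : ℤ), (1 : ℤ)), ((1 : ℤ), (m : ℤ)), ((n : ℤ), (1 : ℤ)), ((n : ℤ), (m : ℤ))}

/-- The degree of a vertex `v` in the induced subgraph `G[S]`. -/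
def degS (S : Finset (ℤ × ℤ)) (v : ℤ × ℤ) : ℕ :=
  (((closedNbr v).erase v) ∩ S).card

/-- The number of leaves (degree-1 vertices) of `G[S]`. -/
def numLeaves (S : Finset (ℤ × ℤ)) : ℕ := (S.filter (fun v => degS S v = 1)).card

/-- The number of degree-3 vertices of `G[S]`. -/
def numDeg3 (S : Finset (ℤ × ℤ)) : ℕ := (S.filter (fun v => degS S v = 3)).card

/-- The number of degree-4 vertices of `G[S]`. -/
def numDeg4 (S : Finset (ℤ × ℤ)) : ℕ := (S.filter (fun v => degS S v = 4)).card

/-- A bend: a degree-2 vertex of `G[S]` having one vertical and one horizontal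
neighbour in `S`. -/
def IsBend (S : Finset (ℤ × ℤ)) (v : ℤ × ℤ) : Prop :=
  degS S v = 2 ∧ ((v.1 + 1, v.2) ∈ S ∨ (v.1 - 1, v.2) ∈ S) ∧
    ((v.1, v.2 + 1) ∈ S ∨ (v.1, v.2 - 1) ∈ S)

instance (S : Finset (ℤ × ℤ)) (v : ℤ × ℤ) : Decidable (IsBend S v) :=
  inferInstanceAs (Decidable (_ ∧ _ ∧ _))

/-- The number of bends of `G[S]`. -/
def numBends (S : Finset (ℤ × ℤ)) : ℕ := (S.filter (fun v => IsBend S v)).card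

/-- The connected domination number `γ_c(G_{n,m})`. -/
noncomputable def connDomNum (n m : ℕ) : ℕ :=
  sInf {k | ∃ S : Finset (ℤ × ℤ), IsCDS n m S ∧ S.card = k}

/-- A maximal horizontal line segment of `G[S]`: the vertices `(i,a),…,(i,b)`
all lie in `S`, and the segment cannot be extended in row `i`. -/
def IsMaxHSeg (S : Finset (ℤ × ℤ)) (i a b : ℤ) : Prop :=
  a ≤ b ∧ (∀ j, a ≤ j → j ≤ b → (i, j) ∈ S) ∧ (i, a - 1) ∉ S ∧ (i, b + 1) ∉ S

/-- A maximal vertical line segment of `G[S]`: the vertices `(a,j),…,(b,j)`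
all lie in `S`, and the segment cannot be extended in column `j`. -/
def IsMaxVSeg (S : Finset (ℤ × ℤ)) (j a b : ℤ) : Prop :=
  a ≤ b ∧ (∀ i, a ≤ i → i ≤ b → (i, j) ∈ S) ∧ (a - 1, j) ∉ S ∧ (b + 1, j) ∉ S

section Basic

lemma gridAdj_iff {u v : ℤ × ℤ} : GridZ.Adj u v ↔
    (v = (u.1 + 1, u.2) ∨ v = (u.1 - 1, u.2) ∨ v = (u.1, u.2 + 1) ∨ v = (u.1, u.2 - 1)) := by
  show |u.1 - v.1| + |u.2 - v.2| = 1 ↔ _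
  rcases abs_cases (u.1 - v.1) with ⟨h1, h2⟩ | ⟨h1, h2⟩ <;>
    rcases abs_cases (u.2 - v.2) with ⟨h3, h4⟩ | ⟨h3, h4⟩ <;>
    simp [Prod.ext_iff] <;> omega

lemma mem_closedNbr {w v : ℤ × ℤ} : w ∈ closedNbr v ↔ (w = v ∨ GridZ.Adj v w) := by
  simp [closedNbr, gridAdj_iff]

lemma mem_closedNbr_comm {w v : ℤ × ℤ} : w ∈ closedNbr v ↔ v ∈ closedNbr w := by
  simp only [mem_closedNbr]
  constructor <;> rintro (rfl | h)
  · left; rfl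
  · right; exact GridZ.adj_symm h
  · left; rfl
  · right; exact GridZ.adj_symm h

lemma card_closedNbr (v : ℤ × ℤ) : (closedNbr v).card = 5 := by
  simp only [closedNbr]
  rw [Finset.card_insert_of_notMem (by simp [Prod.ext_iff]; try omega),
    Finset.card_insert_of_notMem (by simp [Prod.ext_iff]; try omega),
    Finset.card_insert_of_notMem (by simp [Prod.ext_iff]; try omega),
    Finset.card_insert_of_notMem (by simp [Prod.ext_iff]; try omega),
    Finset.card_singleton]

lemma mem_closedN {w : ℤ × ℤ} {S : Finset (ℤ × ℤ)} :
    w ∈ closedN S ↔ ∃ u ∈ S, w ∈ closedNbr u := by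
  simp [closedN]

lemma loss_add_card (S : Finset (ℤ × ℤ)) :
    loss S + (closedN S).card = 5 * S.card := by
  have key : ∀ v ∈ closedN S, 1 ≤ (closedNbr v ∩ S).card := by
    intro v hv
    rw [mem_closedN] at hv
    obtain ⟨u, hu, hvu⟩ := hv
    refine Finset.card_pos.2 ⟨u, Finset.mem_inter.2 ⟨mem_closedNbr_comm.1 hvu, hu⟩⟩
  have h1 : loss S + (closedN S).card = ∑ v ∈ closedN S, (closedNbr v ∩ S).card := by
    rw [loss, Finset.card_eq_sum_ones, ← Finset.sum_add_distrib]
    exact Finset.sum_congr rfl fun v hv => Nat.sub_add_cancel (key v hv)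
  have h2 : ∑ v ∈ closedN S, (closedNbr v ∩ S).card = 5 * S.card := by
    have : ∀ v, (closedNbr v ∩ S).card = ∑ u ∈ S, if v ∈ closedNbr u then 1 else 0 := by
      intro v
      rw [Finset.inter_comm, ← Finset.filter_mem_eq_inter, Finset.card_filter]
      refine Finset.sum_congr rfl fun u hu => ?_
      by_cases h : u ∈ closedNbr v
      · rw [if_pos h, if_pos (mem_closedNbr_comm.1 h)]
      · rw [if_neg h, if_neg (fun h' => h (mem_closedNbr_comm.1 h'))]
    simp only [this]
    rw [Finset.sum_comm]
    have : ∀ u ∈ S, (∑ v ∈ closedN S, if v ∈ closedNbr u then 1 else 0) = 5 := by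
      intro u hu
      rw [← Finset.card_filter]
      have : (closedN S).filter (· ∈ closedNbr u) = closedNbr u := by
        apply Finset.Subset.antisymm
        · intro x hx; exact (Finset.mem_filter.1 hx).2
        · intro x hx
          exact Finset.mem_filter.2 ⟨mem_closedN.2 ⟨u, hu, hx⟩, hx⟩
      rw [this, card_closedNbr]
    rw [Finset.sum_congr rfl this, Finset.sum_const, smul_eq_mul, mul_comm]
  omega

end Basic
section Conn

lemma loss_erase_le {S T : Finset (ℤ × ℤ)} {v : ℤ × ℤ} (hv : v ∈ S)
    (hT1 : T ⊆ closedNbr v) (hT2 : T ⊆ closedN (S.erase v)) :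
    loss (S.erase v) + T.card ≤ loss S := by
  have hsub : closedN S ⊆ closedN (S.erase v) ∪ (closedNbr v \ T) := by
    intro x hx
    obtain ⟨u, hu, hxu⟩ := mem_closedN.1 hx
    by_cases huv : u = v
    · subst huv
      by_cases hxT : x ∈ T
      · exact Finset.mem_union_left _ (hT2 hxT)
      · exact Finset.mem_union_right _ (Finset.mem_sdiff.2 ⟨hxu, hxT⟩)
    · exact Finset.mem_union_left _ (mem_closedN.2 ⟨u, Finset.mem_erase.2 ⟨huv, hu⟩, hxu⟩)
  have hc1 : (closedN S).card ≤ (closedN (S.erase v)).card + (closedNbr v \ T).card :=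
    le_trans (Finset.card_le_card hsub) (Finset.card_union_le _ _)
  have hc2 : (closedNbr v \ T).card = 5 - T.card := by
    rw [Finset.card_sdiff_of_subset hT1, card_closedNbr]
  have hc3 : T.card ≤ 5 := by
    have := Finset.card_le_card hT1
    rwa [card_closedNbr] at this
  have h1 := loss_add_card S
  have h2 := loss_add_card (S.erase v)
  have h3 : (S.erase v).card = S.card - 1 := Finset.card_erase_of_mem hv
  have h4 : 1 ≤ S.card := Finset.card_pos.2 ⟨v, hv⟩
  omega

def ConnOn (S : Finset (ℤ × ℤ)) : Prop :=
  ∀ a ∈ S, ∀ b ∈ S, ∃ p : GridZ.Walk a b, ∀ x ∈ p.support, x ∈ S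

lemma connOn_of_connected {S : Finset (ℤ × ℤ)}
    (h : (GridZ.induce (S : Set (ℤ × ℤ))).Connected) : ConnOn S := by
  have aux : ∀ (x y : (S : Set (ℤ × ℤ))) (w : (GridZ.induce (S : Set (ℤ × ℤ))).Walk x y),
      ∃ p : GridZ.Walk x.1 y.1, ∀ z ∈ p.support, z ∈ S := by
    intro x y w
    induction w with
    | @nil a =>
      refine ⟨.nil, ?_⟩
      intro z hz
      simp only [SimpleGraph.Walk.support_nil, List.mem_singleton] at hz
      subst hz
      exact Finset.mem_coe.1 a.2
    | @cons a b c hadj w ih =>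
      obtain ⟨q, hq⟩ := ih
      refine ⟨.cons (show GridZ.Adj a.1 b.1 from hadj) q, ?_⟩
      intro z hz
      rw [SimpleGraph.Walk.support_cons, List.mem_cons] at hz
      rcases hz with rfl | hz
      · exact Finset.mem_coe.1 a.2
      · exact hq z hz
  intro a ha b hb
  obtain ⟨w⟩ := h.preconnected ⟨a, ha⟩ ⟨b, hb⟩
  exact aux _ _ w

lemma conn_closure {S T : Finset (ℤ × ℤ)} (hC : ConnOn S) {a : ℤ × ℤ}
    (haS : a ∈ S) (haT : a ∈ T)
    (hcl : ∀ y ∈ T, ∀ z ∈ S, GridZ.Adj y z → z ∈ T) : S ⊆ T := by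
  have aux : ∀ {x y : ℤ × ℤ} (p : GridZ.Walk x y), (∀ z ∈ p.support, z ∈ S) → x ∈ T → y ∈ T := by
    intro x y p
    induction p with
    | nil => exact fun _ h => h
    | @cons a' b' c' hadj q ih =>
      intro hs ha'
      refine ih (fun z hz => hs z ?_) (hcl a' ha' b' (hs b' ?_) hadj)
      · rw [SimpleGraph.Walk.support_cons]; exact List.mem_cons_of_mem _ hz
      · rw [SimpleGraph.Walk.support_cons]
        exact List.mem_cons_of_mem _ q.start_mem_support
  intro b hb
  obtain ⟨p, hp⟩ := hC a haS b hb
  exact aux p hp haT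

lemma leaf_removal_conn {S : Finset (ℤ × ℤ)} {v u : ℤ × ℤ} (hu : u ∈ S) (hne : u ≠ v)
    (huniq : ∀ x ∈ S, GridZ.Adj v x → x = u) (hC : ConnOn S) : ConnOn (S.erase v) := by
  have main : ∀ n (a b : ℤ × ℤ), a ∈ S.erase v → b ∈ S.erase v →
      ∀ p : GridZ.Walk a b, p.length = n → (∀ x ∈ p.support, x ∈ S) →
      ∃ q : GridZ.Walk a b, ∀ x ∈ q.support, x ∈ S.erase v := by
    intro n
    induction n using Nat.strong_induction_on with
    | _ n ih =>
      intro a b ha hb p hlen hsupp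
      by_cases hvp : v ∈ p.support
      · have hbv : b ≠ v := (Finset.mem_erase.1 hb).1
        have hav : a ≠ v := (Finset.mem_erase.1 ha).1
        have hspec := p.take_spec hvp
        have hlen2 : (p.takeUntil v hvp).length + (p.dropUntil v hvp).length = p.length := by
          have := congrArg SimpleGraph.Walk.length hspec
          rwa [SimpleGraph.Walk.length_append] at this
        have hsub1 := p.support_takeUntil_subset hvp
        have hsub2 := p.support_dropUntil_subset hvp
        -- decompose dropUntil
        cases hr : p.dropUntil v hvp with
        | nil => exact absurd rfl hbv
        | @cons _ c _ hadj r' =>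
          have hcS : c ∈ S := hsupp c (hsub2 (by
            rw [hr, SimpleGraph.Walk.support_cons]
            exact List.mem_cons_of_mem _ r'.start_mem_support))
          have hcu : c = u := huniq c hcS hadj
          -- decompose takeUntil reversed
          cases hq : (p.takeUntil v hvp).reverse with
          | nil => exact absurd rfl hav
          | @cons _ c2 _ hadj2 q'' =>
            have hc2S : c2 ∈ S := by
              apply hsupp
              apply hsub1
              have : c2 ∈ (p.takeUntil v hvp).reverse.support := by
                rw [hq, SimpleGraph.Walk.support_cons]
                exact List.mem_cons_of_mem _ q''.start_mem_support
              rwa [SimpleGraph.Walk.support_reverse, List.mem_reverse] at this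
            have hc2u : c2 = c := (huniq c2 hc2S hadj2).trans hcu.symm
            subst hc2u
            set p2 : GridZ.Walk a b := q''.reverse.append r' with hp2
            have hsupp2 : ∀ x ∈ p2.support, x ∈ S := by
              intro x hx
              rw [hp2, SimpleGraph.Walk.mem_support_append_iff] at hx
              rcases hx with hx | hx
              · rw [SimpleGraph.Walk.support_reverse, List.mem_reverse] at hx
                apply hsupp; apply hsub1
                have : x ∈ (p.takeUntil v hvp).reverse.support := by
                  rw [hq, SimpleGraph.Walk.support_cons]
                  exact List.mem_cons_of_mem _ hx
                rwa [SimpleGraph.Walk.support_reverse, List.mem_reverse] at this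
              · apply hsupp; apply hsub2
                rw [hr, SimpleGraph.Walk.support_cons]
                exact List.mem_cons_of_mem _ hx
            have hlq : (p.takeUntil v hvp).length = q''.length + 1 := by
              have := congrArg SimpleGraph.Walk.length hq
              rwa [SimpleGraph.Walk.length_reverse, SimpleGraph.Walk.length_cons] at this
            have hlr : (p.dropUntil v hvp).length = r'.length + 1 := by
              rw [hr, SimpleGraph.Walk.length_cons]
            have hlp2 : p2.length = q''.length + r'.length := by
              rw [hp2, SimpleGraph.Walk.length_append, SimpleGraph.Walk.length_reverse]
            exact ih p2.length (by omega) a b ha hb p2 rfl hsupp2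
      · exact ⟨p, fun x hx => Finset.mem_erase.2 ⟨fun h => hvp (h ▸ hx), hsupp x hx⟩⟩
  intro a ha b hb
  obtain ⟨p, hp⟩ := hC a (Finset.mem_of_mem_erase ha) b (Finset.mem_of_mem_erase hb)
  exact main p.length a b ha hb p rfl hp

lemma exists_noncut {S : Finset (ℤ × ℤ)} (h2 : 2 ≤ S.card) (hC : ConnOn S) :
    ∃ v ∈ S, (S.erase v).Nonempty ∧ ConnOn (S.erase v) := by
  classical
  obtain ⟨u, hu⟩ := Finset.card_pos.1 (show 0 < S.card by omega)
  have hex : ∀ b ∈ S, ∃ n : ℕ, ∃ p : GridZ.Walk u b, p.length = n ∧ ∀ x ∈ p.support, x ∈ S := by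
    intro b hb
    obtain ⟨p, hp⟩ := hC u hu b hb
    exact ⟨p.length, p, rfl, hp⟩
  set f : ℤ × ℤ → ℕ := fun b => if hb : b ∈ S then Nat.find (hex b hb) else 0 with hf
  obtain ⟨v, hvS, hvmax⟩ := Finset.exists_max_image S f ⟨u, hu⟩
  have hfu : f u = 0 := by
    rw [hf]; simp only [dif_pos hu]
    rw [Nat.find_eq_zero]
    exact ⟨SimpleGraph.Walk.nil, rfl, fun x hx => by
      simp only [SimpleGraph.Walk.support_nil, List.mem_singleton] at hx; subst hx; exact hu⟩
  have hvu : v ≠ u := by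
    obtain ⟨b, hbS, hbu⟩ := Finset.exists_mem_ne (show (1:ℕ) < S.card by omega) u
    have hfb : 1 ≤ f b := by
      by_contra hlt
      push_neg at hlt
      have h0 : f b = 0 := by omega
      rw [hf] at h0
      simp only [dif_pos hbS] at h0
      obtain ⟨p, hpl, -⟩ := Nat.find_spec (hex b hbS)
      rw [h0] at hpl
      exact hbu (SimpleGraph.Walk.eq_of_length_eq_zero hpl).symm
    intro hveq
    have := hvmax b hbS
    rw [hveq, hfu] at this
    omega
  have hune : u ∈ S.erase v := Finset.mem_erase.2 ⟨fun h => hvu h.symm, hu⟩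
  have claim : ∀ b ∈ S.erase v, ∃ q : GridZ.Walk u b, ∀ x ∈ q.support, x ∈ S.erase v := by
    intro b hb
    have hbS := Finset.mem_of_mem_erase hb
    have hbv : b ≠ v := (Finset.mem_erase.1 hb).1
    obtain ⟨p, hpl, hps⟩ := Nat.find_spec (hex b hbS)
    have hnv : v ∉ p.support := by
      intro hvp
      have hsub1 := p.support_takeUntil_subset hvp
      have hfv : f v ≤ (p.takeUntil v hvp).length := by
        rw [hf]; simp only [dif_pos hvS]
        exact Nat.find_le ⟨p.takeUntil v hvp, rfl, fun x hx => hps x (hsub1 hx)⟩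
      have hlen2 : (p.takeUntil v hvp).length + (p.dropUntil v hvp).length = p.length := by
        have := congrArg SimpleGraph.Walk.length (p.take_spec hvp)
        rwa [SimpleGraph.Walk.length_append] at this
      have hfb : f b = p.length := by rw [hf]; simp only [dif_pos hbS]; omega
      have hmax := hvmax b hbS
      have hdrop0 : (p.dropUntil v hvp).length = 0 := by omega
      exact hbv (SimpleGraph.Walk.eq_of_length_eq_zero hdrop0).symm
    exact ⟨p, fun x hx => Finset.mem_erase.2 ⟨fun h => hnv (h ▸ hx), hps x hx⟩⟩
  refine ⟨v, hvS, ⟨u, hune⟩, ?_⟩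
  intro a ha b hb
  obtain ⟨qa, hqa⟩ := claim a ha
  obtain ⟨qb, hqb⟩ := claim b hb
  refine ⟨qa.reverse.append qb, ?_⟩
  intro x hx
  rw [SimpleGraph.Walk.mem_support_append_iff] at hx
  rcases hx with hx | hx
  · rw [SimpleGraph.Walk.support_reverse, List.mem_reverse] at hx
    exact hqa x hx
  · exact hqb x hx

end Conn
section Geom

/-- point addition -/
def padd (a b : ℤ × ℤ) : ℤ × ℤ := (a.1 + b.1, a.2 + b.2)

/-- point subtraction -/
def psub (a b : ℤ × ℤ) : ℤ × ℤ := (a.1 - b.1, a.2 - b.2)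

/-- pairs of perpendicular unit directions -/
def dirPairs : Finset ((ℤ × ℤ) × (ℤ × ℤ)) :=
  {((1,0),(0,1)), ((1,0),(0,-1)), ((-1,0),(0,1)), ((-1,0),(0,-1)),
   ((0,1),(1,0)), ((0,1),(-1,0)), ((0,-1),(1,0)), ((0,-1),(-1,0))}

lemma nbrs_explicit (x : ℤ × ℤ) : (closedNbr x).erase x =
    {(x.1+1,x.2),(x.1-1,x.2),(x.1,x.2+1),(x.1,x.2-1)} := by
  ext ⟨y1, y2⟩
  simp only [closedNbr, Finset.mem_erase, Finset.mem_insert, Finset.mem_singleton, ne_eq,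
    Prod.ext_iff, Prod.mk.injEq]
  omega

lemma adj_iff_mem_nbrs {x v : ℤ × ℤ} : GridZ.Adj x v ↔ v ∈ (closedNbr x).erase x := by
  rw [nbrs_explicit, gridAdj_iff]
  simp [Prod.ext_iff]

lemma nbrs_swap {x v : ℤ × ℤ} : v ∈ (closedNbr x).erase x ↔ x ∈ (closedNbr v).erase v := by
  rw [← adj_iff_mem_nbrs, ← adj_iff_mem_nbrs, GridZ.adj_comm]

lemma adj_exists_dir {u v : ℤ × ℤ} (h : GridZ.Adj u v) :
    ∃ ef : (ℤ × ℤ) × (ℤ × ℤ), ef ∈ dirPairs ∧ v = padd u ef.1 := by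
  rw [gridAdj_iff] at h
  rcases h with h | h | h | h
  · exact ⟨((1,0),(0,1)), by simp [dirPairs], by simp [padd, h]⟩
  · exact ⟨((-1,0),(0,1)), by simp [dirPairs], by simp [padd, h]; constructor <;> omega⟩
  · exact ⟨((0,1),(1,0)), by simp [dirPairs], by simp [padd, h]⟩
  · exact ⟨((0,-1),(1,0)), by simp [dirPairs], by simp [padd, h]; constructor <;> omega⟩

lemma dirPairs_flip {e f : ℤ × ℤ} (h : (e, f) ∈ dirPairs) : (e, (-f.1, -f.2)) ∈ dirPairs := by
  fin_cases h <;> simp [dirPairs]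

lemma nbrs_of_padd {e f u : ℤ × ℤ} (hef : (e, f) ∈ dirPairs) :
    (closedNbr (padd u e)).erase (padd u e) =
      {u, padd (padd u e) e, padd (padd u e) f, psub (padd u e) f} := by
  fin_cases hef <;>
    · ext ⟨y1, y2⟩
      rw [nbrs_explicit]
      simp only [padd, psub, Finset.mem_insert, Finset.mem_singleton, ne_eq,
        Prod.ext_iff, Prod.mk.injEq]
      omega

lemma nbrs_of_base {e f u : ℤ × ℤ} (hef : (e, f) ∈ dirPairs) :
    (closedNbr u).erase u = {padd u e, psub u e, padd u f, psub u f} := by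
  fin_cases hef <;>
    · ext ⟨y1, y2⟩
      rw [nbrs_explicit]
      simp only [padd, psub, Finset.mem_insert, Finset.mem_singleton, ne_eq,
        Prod.ext_iff, Prod.mk.injEq]
      omega

lemma card_inter_four {a b c d : ℤ × ℤ} {S : Finset (ℤ × ℤ)}
    (hab : a ≠ b) (hac : a ≠ c) (had : a ≠ d) (hbc : b ≠ c) (hbd : b ≠ d) (hcd : c ≠ d) :
    (({a,b,c,d} : Finset (ℤ × ℤ)) ∩ S).card =
      (if a ∈ S then 1 else 0) + (if b ∈ S then 1 else 0) +
      (if c ∈ S then 1 else 0) + (if d ∈ S then 1 else 0) := by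
  rw [← Finset.filter_mem_eq_inter, Finset.card_filter]
  rw [show ({a,b,c,d} : Finset (ℤ × ℤ)) = insert a (insert b (insert c {d})) from rfl]
  rw [Finset.sum_insert (by simp [hab, hac, had]),
    Finset.sum_insert (by simp [hbc, hbd]),
    Finset.sum_insert (by simp [hcd]), Finset.sum_singleton]
  ring

lemma isBend_intro {e f : ℤ × ℤ} (hef : (e, f) ∈ dirPairs) {S : Finset (ℤ × ℤ)} {x : ℤ × ℤ}
    (hdeg : degS S x = 2) (h1 : padd x e ∈ S ∨ psub x e ∈ S)
    (h2 : padd x f ∈ S ∨ psub x f ∈ S) : IsBend S x := by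
  refine ⟨hdeg, ?_, ?_⟩ <;>
    fin_cases hef <;>
    simp only [padd, psub, add_zero, sub_zero,
      show ∀ z : ℤ, z + -1 = z - 1 from fun z => by ring,
      show ∀ z : ℤ, z - -1 = z + 1 from fun z => by ring] at h1 h2 <;>
    tauto

lemma isBend_elim {e f : ℤ × ℤ} (hef : (e, f) ∈ dirPairs) {S : Finset (ℤ × ℤ)} {x : ℤ × ℤ}
    (hb : IsBend S x) :
    (padd x e ∈ S ∨ psub x e ∈ S) ∧ (padd x f ∈ S ∨ psub x f ∈ S) := by
  obtain ⟨-, h1, h2⟩ := hb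
  constructor <;>
    fin_cases hef <;>
    simp only [padd, psub, add_zero, sub_zero,
      show ∀ z : ℤ, z + -1 = z - 1 from fun z => by ring,
      show ∀ z : ℤ, z - -1 = z + 1 from fun z => by ring] <;>
    tauto

lemma degS_erase_not_adj {S : Finset (ℤ × ℤ)} {v x : ℤ × ℤ}
    (h : v ∉ (closedNbr x).erase x) : degS (S.erase v) x = degS S x := by
  unfold degS
  congr 1
  ext y
  constructor
  · intro hy
    rcases Finset.mem_inter.1 hy with ⟨h1, h2⟩
    exact Finset.mem_inter.2 ⟨h1, Finset.mem_of_mem_erase h2⟩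
  · intro hy
    rcases Finset.mem_inter.1 hy with ⟨h1, h2⟩
    exact Finset.mem_inter.2 ⟨h1, Finset.mem_erase.2 ⟨fun hyv => h (hyv ▸ h1), h2⟩⟩

lemma degS_erase_adj {S : Finset (ℤ × ℤ)} {v x : ℤ × ℤ}
    (h : v ∈ (closedNbr x).erase x) (hvS : v ∈ S) : degS (S.erase v) x + 1 = degS S x := by
  unfold degS
  have : (closedNbr x).erase x ∩ S.erase v = ((closedNbr x).erase x ∩ S).erase v := by
    ext y
    simp only [Finset.mem_inter, Finset.mem_erase]
    tauto
  rw [this, Finset.card_erase_of_mem (Finset.mem_inter.2 ⟨h, hvS⟩)]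
  have : v ∈ (closedNbr x).erase x ∩ S := Finset.mem_inter.2 ⟨h, hvS⟩
  have := Finset.card_pos.2 ⟨v, this⟩
  omega

lemma bend_keep {S : Finset (ℤ × ℤ)} {v x : ℤ × ℤ} (hx : IsBend S x) (hxv : x ≠ v)
    (hnadj : x ∉ (closedNbr v).erase v) : IsBend (S.erase v) x := by
  have hvx : v ∉ (closedNbr x).erase x := fun h => hnadj (nbrs_swap.1 h)
  obtain ⟨hdeg, h1, h2⟩ := hx
  have key : ∀ w, w ∈ (closedNbr x).erase x → w ∈ S → w ∈ S.erase v := by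
    intro w hw hwS
    exact Finset.mem_erase.2 ⟨fun hwv => hvx (hwv ▸ hw), hwS⟩
  have m1 : ((x.1+1, x.2) : ℤ × ℤ) ∈ (closedNbr x).erase x := by
    rw [nbrs_explicit]; simp
  have m2 : ((x.1-1, x.2) : ℤ × ℤ) ∈ (closedNbr x).erase x := by
    rw [nbrs_explicit]; simp
  have m3 : ((x.1, x.2+1) : ℤ × ℤ) ∈ (closedNbr x).erase x := by
    rw [nbrs_explicit]; simp
  have m4 : ((x.1, x.2-1) : ℤ × ℤ) ∈ (closedNbr x).erase x := by
    rw [nbrs_explicit]; simp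
  refine ⟨by rw [degS_erase_not_adj hvx]; exact hdeg, ?_, ?_⟩
  · rcases h1 with h | h
    · exact Or.inl (key _ m1 h)
    · exact Or.inr (key _ m2 h)
  · rcases h2 with h | h
    · exact Or.inl (key _ m3 h)
    · exact Or.inr (key _ m4 h)

end Geom
section Master

lemma mem_closedNbr_self (v : ℤ × ℤ) : v ∈ closedNbr v := by simp [closedNbr]

lemma subset_insert_erase {s : Finset (ℤ × ℤ)} {a : ℤ × ℤ} : s ⊆ insert a (s.erase a) := by
  intro x hx
  by_cases hxa : x = a
  · exact Finset.mem_insert.2 (Or.inl hxa)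
  · exact Finset.mem_insert.2 (Or.inr (Finset.mem_erase.2 ⟨hxa, hx⟩))

set_option maxHeartbeats 3000000 in
lemma master : ∀ (n : ℕ) (S : Finset (ℤ × ℤ)), S.card = n → S.Nonempty → ConnOn S →
    2 * S.card + 2 * numLeaves S + numBends S ≤ loss S + 6 := by
  intro n
  induction n using Nat.strong_induction_on with
  | _ n ih =>
  intro S hcard hne hC
  by_cases h1 : S.card = 1
  · -- singleton
    obtain ⟨v, rfl⟩ := Finset.card_eq_one.1 h1
    have hdeg : degS {v} v = 0 := by
      unfold degS
      rw [Finset.card_eq_zero]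
      ext y
      simp only [Finset.mem_inter, Finset.mem_erase, Finset.mem_singleton,
        Finset.notMem_empty, iff_false]
      rintro ⟨⟨hne', -⟩, rfl⟩
      exact hne' rfl
    have hl : numLeaves {v} = 0 := by
      unfold numLeaves
      rw [Finset.card_eq_zero, Finset.filter_eq_empty_iff]
      intro x hx
      rw [Finset.mem_singleton] at hx
      subst hx
      omega
    have hb : numBends {v} = 0 := by
      unfold numBends
      rw [Finset.card_eq_zero, Finset.filter_eq_empty_iff]
      intro x hx
      rw [Finset.mem_singleton] at hx
      subst hx
      intro hbend
      have := hbend.1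
      omega
    rw [h1, hl, hb]
    omega
  · have hc2 : 2 ≤ S.card := by
      have := Finset.card_pos.2 hne
      omega
    have hdegpos : ∀ x ∈ S, 1 ≤ degS S x := by
      intro x hx
      obtain ⟨y, hyS, hyx⟩ := Finset.exists_mem_ne (show (1:ℕ) < S.card by omega) x
      obtain ⟨p, hp⟩ := hC x hx y hyS
      cases p with
      | nil => exact absurd rfl hyx
      | @cons _ z _ hadj q =>
        have hzS : z ∈ S := hp z (by
          rw [SimpleGraph.Walk.support_cons]
          exact List.mem_cons_of_mem _ q.start_mem_support)
        refine Finset.card_pos.2 ⟨z, Finset.mem_inter.2 ⟨adj_iff_mem_nbrs.1 hadj, hzS⟩⟩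
    by_cases hleaf : ∃ v ∈ S, degS S v = 1
    · -- CASE A : leaf removal
      obtain ⟨v, hvS, hdv⟩ := hleaf
      obtain ⟨u, hu1⟩ := Finset.card_eq_one.1 hdv
      have huin : u ∈ (closedNbr v).erase v ∩ S := by
        rw [hu1]; exact Finset.mem_singleton_self u
      rcases Finset.mem_inter.1 huin with ⟨hun, huS⟩
      have huv : u ≠ v := (Finset.mem_erase.1 hun).1
      have huniq : ∀ x ∈ S, GridZ.Adj v x → x = u := by
        intro x hxS hadj
        have hxi : x ∈ (closedNbr v).erase v ∩ S :=
          Finset.mem_inter.2 ⟨adj_iff_mem_nbrs.1 hadj, hxS⟩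
        rw [hu1] at hxi
        exact Finset.mem_singleton.1 hxi
      have hS'conn : ConnOn (S.erase v) := leaf_removal_conn huS huv huniq hC
      have hu' : u ∈ S.erase v := Finset.mem_erase.2 ⟨huv, huS⟩
      have hS'ne : (S.erase v).Nonempty := ⟨u, hu'⟩
      have hcard' : (S.erase v).card = S.card - 1 := Finset.card_erase_of_mem hvS
      have ihS' := ih (S.erase v).card (by omega) (S.erase v) rfl hS'ne hS'conn
      have hvN : v ∈ closedN (S.erase v) :=
        mem_closedN.2 ⟨u, hu', mem_closedNbr_comm.1 (Finset.mem_of_mem_erase hun)⟩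
      by_cases hS2 : S.card = 2
      · -- two-element case
        have hlle : numLeaves S ≤ 2 := by
          have := Finset.card_filter_le S (fun x => degS S x = 1)
          unfold numLeaves
          omega
        have hb0 : numBends S = 0 := by
          unfold numBends
          rw [Finset.card_eq_zero, Finset.filter_eq_empty_iff]
          intro x hxS hbend
          have hsub : (closedNbr x).erase x ∩ S ⊆ S.erase x := by
            intro y hy
            rcases Finset.mem_inter.1 hy with ⟨hy1, hy2⟩
            exact Finset.mem_erase.2 ⟨(Finset.mem_erase.1 hy1).1, hy2⟩
          have hle := Finset.card_le_card hsub
          rw [Finset.card_erase_of_mem hxS, hS2] at hle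
          have hd2 := hbend.1
          unfold degS at hd2
          omega
        have hTc : ({v, u} : Finset (ℤ × ℤ)).card = 2 := by
          rw [Finset.card_insert_of_notMem (by
            rw [Finset.mem_singleton]; exact fun h => huv h.symm), Finset.card_singleton]
        have hloss2 : loss (S.erase v) + ({v, u} : Finset (ℤ × ℤ)).card ≤ loss S := by
          apply loss_erase_le hvS
          · intro x hx
            rcases Finset.mem_insert.1 hx with rfl | hx
            · exact mem_closedNbr_self _
            · rw [Finset.mem_singleton] at hx
              subst hx
              exact Finset.mem_of_mem_erase hun
          · intro x hx
            rcases Finset.mem_insert.1 hx with rfl | hx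
            · exact hvN
            · rw [Finset.mem_singleton] at hx
              subst hx
              exact mem_closedN.2 ⟨_, hu', mem_closedNbr_self _⟩
        rw [hTc] at hloss2
        rw [hS2, hb0]
        omega
      · -- at least three vertices
        have hc3 : 3 ≤ S.card := by omega
        have hdegu : degS S u ≠ 1 := by
          intro hdu
          obtain ⟨x, hx1⟩ := Finset.card_eq_one.1 hdu
          have hvin : v ∈ (closedNbr u).erase u ∩ S :=
            Finset.mem_inter.2 ⟨nbrs_swap.1 hun, hvS⟩
          rw [hx1] at hvin
          have hxv : v = x := Finset.mem_singleton.1 hvin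
          subst hxv
          have hclose : S ⊆ {v, u} := by
            refine conn_closure hC hvS (by simp) ?_
            intro y hyT z hzS hadj
            rcases Finset.mem_insert.1 hyT with rfl | hyT
            · exact Finset.mem_insert.2 (Or.inr (Finset.mem_singleton.2 (huniq z hzS hadj)))
            · rw [Finset.mem_singleton] at hyT
              subst hyT
              have hzi : z ∈ (closedNbr y).erase y ∩ S :=
                Finset.mem_inter.2 ⟨adj_iff_mem_nbrs.1 hadj, hzS⟩
              rw [hx1] at hzi
              exact Finset.mem_insert.2 (Or.inl (Finset.mem_singleton.1 hzi))
          have hle := Finset.card_le_card hclose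
          have hle2 : ({v, u} : Finset (ℤ × ℤ)).card ≤ 2 := by
            refine le_trans (Finset.card_insert_le _ _) ?_
            rw [Finset.card_singleton]
          omega
        have hdegu2 : 2 ≤ degS S u := by
          have := hdegpos u huS
          omega
        have hadjuv : GridZ.Adj u v := GridZ.adj_symm (adj_iff_mem_nbrs.2 hun)
        obtain ⟨⟨e, f0⟩, hef0, hv0⟩ := adj_exists_dir hadjuv
        have hv : v = padd u e := hv0
        obtain ⟨f, hef, hpref⟩ : ∃ f, (e, f) ∈ dirPairs ∧ (psub u f ∈ S → padd u f ∈ S) := by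
          by_cases hff : psub u f0 ∈ S → padd u f0 ∈ S
          · exact ⟨f0, hef0, hff⟩
          · push_neg at hff
            refine ⟨(-f0.1, -f0.2), dirPairs_flip hef0, ?_⟩
            intro hmem
            exfalso
            have h1 : psub u (-f0.1, -f0.2) = padd u f0 := by
              simp only [padd, psub, Prod.mk.injEq]
              omega
            rw [h1] at hmem
            exact hff.2 hmem
        subst hv
        -- distinctness facts
        obtain ⟨d1, d2, d3, d4, d5, d6, d7, d8, d9, d10, d11, d12, d13, d14⟩ :
            padd u e ≠ u ∧ padd (padd u e) f ≠ u ∧ psub (padd u e) f ≠ u ∧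
            padd (padd u e) f ≠ padd u e ∧ psub (padd u e) f ≠ padd u e ∧
            padd (padd u e) f ≠ psub (padd u e) f ∧
            padd u f ≠ padd u e ∧ psub u f ≠ padd u e ∧ psub u e ≠ padd u e ∧
            padd u e ≠ psub u e ∧ padd u e ≠ padd u f ∧ padd u e ≠ psub u f ∧
            psub u e ≠ padd u f ∧ psub u e ≠ psub u f := by
          fin_cases hef <;> simp [padd, psub, Prod.ext_iff] <;> omega
        have d15 : padd u f ≠ psub u f := by
          fin_cases hef <;> simp [padd, psub, Prod.ext_iff] <;> omega
        have hw1cn : padd (padd u e) f ∈ closedNbr (padd u e) := by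
          fin_cases hef <;> simp [closedNbr, padd, psub, Prod.ext_iff] <;> omega
        have hw2cn : psub (padd u e) f ∈ closedNbr (padd u e) := by
          fin_cases hef <;> simp [closedNbr, padd, psub, Prod.ext_iff] <;> omega
        have hw1n1 : padd (padd u e) f ∈ closedNbr (padd u f) := by
          fin_cases hef <;> simp [closedNbr, padd, psub, Prod.ext_iff] <;> omega
        have hw2n2 : psub (padd u e) f ∈ closedNbr (psub u f) := by
          fin_cases hef <;> simp [closedNbr, padd, psub, Prod.ext_iff] <;> omega
        -- degree formula for u
        have hdegu_eq : degS S u = (if padd u e ∈ S then 1 else 0) +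
            (if psub u e ∈ S then 1 else 0) + (if padd u f ∈ S then 1 else 0) +
            (if psub u f ∈ S then 1 else 0) := by
          unfold degS
          rw [nbrs_of_base hef, card_inter_four d10 d11 d12 d13 d14 d15]
        -- leaves bookkeeping (general)
        have hLsub : (S.filter (fun x => degS S x = 1)).erase (padd u e) ⊆
            (S.erase (padd u e)).filter (fun x => degS (S.erase (padd u e)) x = 1) := by
          intro x hx
          rcases Finset.mem_erase.1 hx with ⟨hxv, hx2⟩
          rcases Finset.mem_filter.1 hx2 with ⟨hxS, hxdeg⟩
          have hxu : x ≠ u := fun h => hdegu (h ▸ hxdeg)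
          have hxnadj : x ∉ (closedNbr (padd u e)).erase (padd u e) := by
            intro hmem
            have hxi : x ∈ (closedNbr (padd u e)).erase (padd u e) ∩ S :=
              Finset.mem_inter.2 ⟨hmem, hxS⟩
            rw [hu1] at hxi
            exact hxu (Finset.mem_singleton.1 hxi)
          have hnadj' : padd u e ∉ (closedNbr x).erase x := fun h => hxnadj (nbrs_swap.1 h)
          refine Finset.mem_filter.2 ⟨Finset.mem_erase.2 ⟨hxv, hxS⟩, ?_⟩
          rw [degS_erase_not_adj hnadj']
          exact hxdeg
        have hvleaf : padd u e ∈ S.filter (fun x => degS S x = 1) :=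
          Finset.mem_filter.2 ⟨hvS, hdv⟩
        have hLcard : numLeaves S ≤ numLeaves (S.erase (padd u e)) + 1 := by
          have h1 := Finset.card_le_card hLsub
          rw [Finset.card_erase_of_mem hvleaf] at h1
          unfold numLeaves
          omega
        have huNotLeaf : u ∉ S.filter (fun x => degS S x = 1) := by
          intro h
          exact hdegu (Finset.mem_filter.1 h).2
        -- bends kept
        have hBsub : (S.filter (fun x => IsBend S x)).erase u ⊆
            (S.erase (padd u e)).filter (fun x => IsBend (S.erase (padd u e)) x) := by
          intro x hx
          rcases Finset.mem_erase.1 hx with ⟨hxu, hx2⟩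
          rcases Finset.mem_filter.1 hx2 with ⟨hxS, hxb⟩
          have hxv : x ≠ padd u e := by
            intro h
            have hb2 := hxb.1
            rw [h] at hb2
            omega
          have hxnadj : x ∉ (closedNbr (padd u e)).erase (padd u e) := by
            intro hmem
            have hxi : x ∈ (closedNbr (padd u e)).erase (padd u e) ∩ S :=
              Finset.mem_inter.2 ⟨hmem, hxS⟩
            rw [hu1] at hxi
            exact hxu (Finset.mem_singleton.1 hxi)
          exact Finset.mem_filter.2 ⟨Finset.mem_erase.2 ⟨hxv, hxS⟩, bend_keep hxb hxv hxnadj⟩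
        -- degree of u in S'
        have hvmemnbru : padd u e ∈ (closedNbr u).erase u := nbrs_swap.1 hun
        have hdegu' : degS (S.erase (padd u e)) u + 1 = degS S u := degS_erase_adj hvmemnbru hvS
        -- case split on the three neighbour slots
        by_cases hp1 : padd u f ∈ S <;> by_cases hp2 : psub u f ∈ S <;> by_cases hp3 : psub u e ∈ S
        · -- TTT : deg u = 4
          have hval : degS S u = 4 := by rw [hdegu_eq]; simp [hp1, hp2, hp3, hvS]
          have hub : u ∉ S.filter (fun x => IsBend S x) := by
            intro h
            have := (Finset.mem_filter.1 h).2.1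
            omega
          have hBc : numBends S ≤ numBends (S.erase (padd u e)) := by
            have h1 := Finset.card_le_card hBsub
            rw [Finset.erase_eq_of_notMem hub] at h1
            unfold numBends
            omega
          have hTc : ({padd u e, u, padd (padd u e) f, psub (padd u e) f} :
              Finset (ℤ × ℤ)).card = 4 := by
            rw [Finset.card_insert_of_notMem (by simp [d1, d4.symm, d5.symm]),
              Finset.card_insert_of_notMem (by simp [d2.symm, d3.symm]),
              Finset.card_insert_of_notMem (by simp [d6]), Finset.card_singleton]
          have hloss4 : loss (S.erase (padd u e)) +
              ({padd u e, u, padd (padd u e) f, psub (padd u e) f} :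
                Finset (ℤ × ℤ)).card ≤ loss S := by
            apply loss_erase_le hvS
            · intro x hx
              rcases Finset.mem_insert.1 hx with rfl | hx
              · exact mem_closedNbr_self _
              rcases Finset.mem_insert.1 hx with rfl | hx
              · exact Finset.mem_of_mem_erase hun
              rcases Finset.mem_insert.1 hx with rfl | hx
              · exact hw1cn
              rw [Finset.mem_singleton] at hx
              subst hx
              exact hw2cn
            · intro x hx
              rcases Finset.mem_insert.1 hx with rfl | hx
              · exact hvN
              rcases Finset.mem_insert.1 hx with rfl | hx
              · exact mem_closedN.2 ⟨_, hu', mem_closedNbr_self _⟩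
              rcases Finset.mem_insert.1 hx with rfl | hx
              · exact mem_closedN.2 ⟨padd u f, Finset.mem_erase.2 ⟨d7, hp1⟩, hw1n1⟩
              rw [Finset.mem_singleton] at hx
              subst hx
              exact mem_closedN.2 ⟨psub u f, Finset.mem_erase.2 ⟨d8, hp2⟩, hw2n2⟩
          rw [hTc] at hloss4
          omega
        · -- TTF : deg u = 3, both f-neighbours
          have hval : degS S u = 3 := by rw [hdegu_eq]; simp [hp1, hp2, hp3, hvS]
          have hub : u ∉ S.filter (fun x => IsBend S x) := by
            intro h
            have := (Finset.mem_filter.1 h).2.1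
            omega
          have hBc : numBends S ≤ numBends (S.erase (padd u e)) := by
            have h1 := Finset.card_le_card hBsub
            rw [Finset.erase_eq_of_notMem hub] at h1
            unfold numBends
            omega
          have hTc : ({padd u e, u, padd (padd u e) f, psub (padd u e) f} :
              Finset (ℤ × ℤ)).card = 4 := by
            rw [Finset.card_insert_of_notMem (by simp [d1, d4.symm, d5.symm]),
              Finset.card_insert_of_notMem (by simp [d2.symm, d3.symm]),
              Finset.card_insert_of_notMem (by simp [d6]), Finset.card_singleton]
          have hloss4 : loss (S.erase (padd u e)) +
              ({padd u e, u, padd (padd u e) f, psub (padd u e) f} :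
                Finset (ℤ × ℤ)).card ≤ loss S := by
            apply loss_erase_le hvS
            · intro x hx
              rcases Finset.mem_insert.1 hx with rfl | hx
              · exact mem_closedNbr_self _
              rcases Finset.mem_insert.1 hx with rfl | hx
              · exact Finset.mem_of_mem_erase hun
              rcases Finset.mem_insert.1 hx with rfl | hx
              · exact hw1cn
              rw [Finset.mem_singleton] at hx
              subst hx
              exact hw2cn
            · intro x hx
              rcases Finset.mem_insert.1 hx with rfl | hx
              · exact hvN
              rcases Finset.mem_insert.1 hx with rfl | hx
              · exact mem_closedN.2 ⟨_, hu', mem_closedNbr_self _⟩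
              rcases Finset.mem_insert.1 hx with rfl | hx
              · exact mem_closedN.2 ⟨padd u f, Finset.mem_erase.2 ⟨d7, hp1⟩, hw1n1⟩
              rw [Finset.mem_singleton] at hx
              subst hx
              exact mem_closedN.2 ⟨psub u f, Finset.mem_erase.2 ⟨d8, hp2⟩, hw2n2⟩
          rw [hTc] at hloss4
          omega
        · -- TFT : deg u = 3, p1 and p3 : u becomes a new bend
          have hval : degS S u = 3 := by rw [hdegu_eq]; simp [hp1, hp2, hp3, hvS]
          have hub : u ∉ S.filter (fun x => IsBend S x) := by
            intro h
            have := (Finset.mem_filter.1 h).2.1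
            omega
          have hnewbend : IsBend (S.erase (padd u e)) u := by
            refine isBend_intro hef (by omega) ?_ ?_
            · exact Or.inr (Finset.mem_erase.2 ⟨d9, hp3⟩)
            · exact Or.inl (Finset.mem_erase.2 ⟨d7, hp1⟩)
          have hBc : numBends S + 1 ≤ numBends (S.erase (padd u e)) := by
            have hsub2 : insert u (S.filter (fun x => IsBend S x)) ⊆
                (S.erase (padd u e)).filter (fun x => IsBend (S.erase (padd u e)) x) := by
              intro x hx
              rcases Finset.mem_insert.1 hx with rfl | hx
              · exact Finset.mem_filter.2 ⟨Finset.mem_erase.2 ⟨fun h => d1 h.symm, huS⟩, hnewbend⟩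
              · refine hBsub (Finset.mem_erase.2 ⟨?_, hx⟩)
                intro h
                exact hub (h ▸ hx)
            have h1 := Finset.card_le_card hsub2
            rw [Finset.card_insert_of_notMem hub] at h1
            unfold numBends
            omega
          have hTc : ({padd u e, u, padd (padd u e) f} : Finset (ℤ × ℤ)).card = 3 := by
            rw [Finset.card_insert_of_notMem (by simp [d1, d4.symm]),
              Finset.card_insert_of_notMem (by simp [d2.symm]), Finset.card_singleton]
          have hloss3 : loss (S.erase (padd u e)) +
              ({padd u e, u, padd (padd u e) f} : Finset (ℤ × ℤ)).card ≤ loss S := by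
            apply loss_erase_le hvS
            · intro x hx
              rcases Finset.mem_insert.1 hx with rfl | hx
              · exact mem_closedNbr_self _
              rcases Finset.mem_insert.1 hx with rfl | hx
              · exact Finset.mem_of_mem_erase hun
              rw [Finset.mem_singleton] at hx
              subst hx
              exact hw1cn
            · intro x hx
              rcases Finset.mem_insert.1 hx with rfl | hx
              · exact hvN
              rcases Finset.mem_insert.1 hx with rfl | hx
              · exact mem_closedN.2 ⟨_, hu', mem_closedNbr_self _⟩
              rw [Finset.mem_singleton] at hx
              subst hx
              exact mem_closedN.2 ⟨padd u f, Finset.mem_erase.2 ⟨d7, hp1⟩, hw1n1⟩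
          rw [hTc] at hloss3
          omega
        · -- TFF : deg u = 2, bend at u
          have hval : degS S u = 2 := by rw [hdegu_eq]; simp [hp1, hp2, hp3, hvS]
          have hBc : numBends S ≤ numBends (S.erase (padd u e)) + 1 := by
            have h1 := Finset.card_le_card hBsub
            have h2 := Finset.pred_card_le_card_erase
              (s := S.filter (fun x => IsBend S x)) (a := u)
            unfold numBends
            omega
          have huleaf' : u ∈ (S.erase (padd u e)).filter
              (fun x => degS (S.erase (padd u e)) x = 1) := by
            refine Finset.mem_filter.2 ⟨hu', by omega⟩
          have hLcard2 : numLeaves S ≤ numLeaves (S.erase (padd u e)) := by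
            have hsub2 : insert u ((S.filter (fun x => degS S x = 1)).erase (padd u e)) ⊆
                (S.erase (padd u e)).filter (fun x => degS (S.erase (padd u e)) x = 1) := by
              intro x hx
              rcases Finset.mem_insert.1 hx with rfl | hx
              · exact huleaf'
              · exact hLsub hx
            have h1 := Finset.card_le_card hsub2
            rw [Finset.card_insert_of_notMem (fun h => huNotLeaf (Finset.mem_of_mem_erase h)),
              Finset.card_erase_of_mem hvleaf] at h1
            unfold numLeaves
            have := Finset.card_pos.2 ⟨padd u e, hvleaf⟩
            omega
          have hTc : ({padd u e, u, padd (padd u e) f} : Finset (ℤ × ℤ)).card = 3 := by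
            rw [Finset.card_insert_of_notMem (by simp [d1, d4.symm]),
              Finset.card_insert_of_notMem (by simp [d2.symm]), Finset.card_singleton]
          have hloss3 : loss (S.erase (padd u e)) +
              ({padd u e, u, padd (padd u e) f} : Finset (ℤ × ℤ)).card ≤ loss S := by
            apply loss_erase_le hvS
            · intro x hx
              rcases Finset.mem_insert.1 hx with rfl | hx
              · exact mem_closedNbr_self _
              rcases Finset.mem_insert.1 hx with rfl | hx
              · exact Finset.mem_of_mem_erase hun
              rw [Finset.mem_singleton] at hx
              subst hx
              exact hw1cn
            · intro x hx
              rcases Finset.mem_insert.1 hx with rfl | hx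
              · exact hvN
              rcases Finset.mem_insert.1 hx with rfl | hx
              · exact mem_closedN.2 ⟨_, hu', mem_closedNbr_self _⟩
              rw [Finset.mem_singleton] at hx
              subst hx
              exact mem_closedN.2 ⟨padd u f, Finset.mem_erase.2 ⟨d7, hp1⟩, hw1n1⟩
          rw [hTc] at hloss3
          omega
        · -- FTT : impossible by preference
          exact absurd (hpref hp2) hp1
        · -- FTF : impossible by preference
          exact absurd (hpref hp2) hp1
        · -- FFT : straight, deg u = 2
          have hval : degS S u = 2 := by rw [hdegu_eq]; simp [hp1, hp2, hp3, hvS]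
          have hub : u ∉ S.filter (fun x => IsBend S x) := by
            intro h
            rcases (isBend_elim hef (Finset.mem_filter.1 h).2).2 with h' | h'
            · exact hp1 h'
            · exact hp2 h'
          have hBc : numBends S ≤ numBends (S.erase (padd u e)) := by
            have h1 := Finset.card_le_card hBsub
            rw [Finset.erase_eq_of_notMem hub] at h1
            unfold numBends
            omega
          have huleaf' : u ∈ (S.erase (padd u e)).filter
              (fun x => degS (S.erase (padd u e)) x = 1) := by
            refine Finset.mem_filter.2 ⟨hu', by omega⟩
          have hLcard2 : numLeaves S ≤ numLeaves (S.erase (padd u e)) := by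
            have hsub2 : insert u ((S.filter (fun x => degS S x = 1)).erase (padd u e)) ⊆
                (S.erase (padd u e)).filter (fun x => degS (S.erase (padd u e)) x = 1) := by
              intro x hx
              rcases Finset.mem_insert.1 hx with rfl | hx
              · exact huleaf'
              · exact hLsub hx
            have h1 := Finset.card_le_card hsub2
            rw [Finset.card_insert_of_notMem (fun h => huNotLeaf (Finset.mem_of_mem_erase h)),
              Finset.card_erase_of_mem hvleaf] at h1
            unfold numLeaves
            have := Finset.card_pos.2 ⟨padd u e, hvleaf⟩
            omega
          have hTc : ({padd u e, u} : Finset (ℤ × ℤ)).card = 2 := by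
            rw [Finset.card_insert_of_notMem (by simp [d1]), Finset.card_singleton]
          have hloss2 : loss (S.erase (padd u e)) +
              ({padd u e, u} : Finset (ℤ × ℤ)).card ≤ loss S := by
            apply loss_erase_le hvS
            · intro x hx
              rcases Finset.mem_insert.1 hx with rfl | hx
              · exact mem_closedNbr_self _
              rw [Finset.mem_singleton] at hx
              subst hx
              exact Finset.mem_of_mem_erase hun
            · intro x hx
              rcases Finset.mem_insert.1 hx with rfl | hx
              · exact hvN
              rw [Finset.mem_singleton] at hx
              subst hx
              exact mem_closedN.2 ⟨_, hu', mem_closedNbr_self _⟩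
          rw [hTc] at hloss2
          omega
        · -- FFF : impossible, deg u = 1
          have hval : degS S u = 1 := by rw [hdegu_eq]; simp [hp1, hp2, hp3, hvS]
          omega
    · -- CASE B : no leaves
      have hl0 : numLeaves S = 0 := by
        unfold numLeaves
        rw [Finset.card_eq_zero, Finset.filter_eq_empty_iff]
        intro x hx hdx
        exact hleaf ⟨x, hx, hdx⟩
      obtain ⟨v, hvS, hS'ne, hS'conn⟩ := exists_noncut hc2 hC
      have hdv2 : 2 ≤ degS S v := by
        have h1 := hdegpos v hvS
        have h2 : degS S v ≠ 1 := fun h => hleaf ⟨v, hvS, h⟩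
        omega
      set S' := S.erase v with hS'
      have hcard' : S'.card = S.card - 1 := Finset.card_erase_of_mem hvS
      have ihS' := ih S'.card (by omega) S' rfl hS'ne hS'conn
      -- loss bound
      set T : Finset (ℤ × ℤ) := insert v ((closedNbr v).erase v ∩ S) with hT
      have hcardT : T.card = 1 + degS S v := by
        rw [hT, Finset.card_insert_of_notMem (by
          intro hmem
          exact (Finset.mem_erase.1 (Finset.mem_inter.1 hmem).1).1 rfl)]
        unfold degS
        omega
      have hT1 : T ⊆ closedNbr v := by
        intro x hx
        rcases Finset.mem_insert.1 hx with rfl | hx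
        · exact mem_closedNbr_self _
        · exact Finset.mem_of_mem_erase (Finset.mem_inter.1 hx).1
      have hT2 : T ⊆ closedN S' := by
        intro x hx
        rcases Finset.mem_insert.1 hx with rfl | hx
        · obtain ⟨u0, hu0⟩ := Finset.card_pos.1 (show 0 < ((closedNbr x).erase x ∩ S).card by
            unfold degS at hdv2; omega)
          rcases Finset.mem_inter.1 hu0 with ⟨hu0n, hu0S⟩
          refine mem_closedN.2 ⟨u0, Finset.mem_erase.2 ⟨(Finset.mem_erase.1 hu0n).1, hu0S⟩, ?_⟩
          exact Finset.mem_of_mem_erase (nbrs_swap.1 hu0n)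
        · rcases Finset.mem_inter.1 hx with ⟨hxn, hxS⟩
          refine mem_closedN.2 ⟨x, Finset.mem_erase.2 ⟨(Finset.mem_erase.1 hxn).1, hxS⟩,
            mem_closedNbr_self x⟩
      have hloss : loss S' + T.card ≤ loss S := loss_erase_le hvS hT1 hT2
      -- bends bookkeeping
      set BN := (((closedNbr v).erase v ∩ S)).filter (fun x => IsBend S x) with hBN
      have hbendsub : S.filter (fun x => IsBend S x) ⊆
          insert v ((S'.filter (fun x => IsBend S' x)) ∪ BN) := by
        intro x hx
        rcases Finset.mem_filter.1 hx with ⟨hxS, hxb⟩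
        by_cases hxv : x = v
        · exact Finset.mem_insert.2 (Or.inl hxv)
        by_cases hxn : x ∈ (closedNbr v).erase v
        · exact Finset.mem_insert.2 (Or.inr (Finset.mem_union_right _
            (Finset.mem_filter.2 ⟨Finset.mem_inter.2 ⟨hxn, hxS⟩, hxb⟩)))
        · refine Finset.mem_insert.2 (Or.inr (Finset.mem_union_left _
            (Finset.mem_filter.2 ⟨Finset.mem_erase.2 ⟨hxv, hxS⟩, ?_⟩)))
          exact bend_keep hxb hxv hxn
      have hbends : numBends S ≤ numBends S' + 1 + BN.card := by
        have hb1 := Finset.card_le_card hbendsub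
        have hb2 := Finset.card_insert_le v ((S'.filter (fun x => IsBend S' x)) ∪ BN)
        have hb3 := Finset.card_union_le (S'.filter (fun x => IsBend S' x)) BN
        unfold numBends
        omega
      have hBNleaf : BN ⊆ S'.filter (fun x => degS S' x = 1) := by
        intro x hx
        rcases Finset.mem_filter.1 hx with ⟨hxi, hxb⟩
        rcases Finset.mem_inter.1 hxi with ⟨hxn, hxS⟩
        have hxv : x ≠ v := (Finset.mem_erase.1 hxn).1
        have hvx : v ∈ (closedNbr x).erase x := nbrs_swap.2 hxn
        have hdx : degS S' x + 1 = degS S x := degS_erase_adj hvx hvS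
        refine Finset.mem_filter.2 ⟨Finset.mem_erase.2 ⟨hxv, hxS⟩, ?_⟩
        have := hxb.1
        omega
      have hBNl : BN.card ≤ numLeaves S' := Finset.card_le_card hBNleaf
      rw [hl0]
      omega

end Master
section Excess

lemma mem_box {n m : ℕ} {p : ℤ × ℤ} :
    p ∈ box n m ↔ (1 ≤ p.1 ∧ p.1 ≤ (n:ℤ) ∧ 1 ≤ p.2 ∧ p.2 ≤ (m:ℤ)) := Iff.rfl

lemma boundary_of_extremal {n m : ℕ} (hn : 4 ≤ n) (hm : 4 ≤ m) {p : ℤ × ℤ}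
    (hp : p ∈ box n m) (hex : p.1 = 1 ∨ p.1 = (n:ℤ) ∨ p.2 = 1 ∨ p.2 = (m:ℤ)) :
    p ∈ boundary n m := by
  have hn' : (4:ℤ) ≤ (n:ℤ) := by exact_mod_cast hn
  have hm' : (4:ℤ) ≤ (m:ℤ) := by exact_mod_cast hm
  refine ⟨hp, ?_⟩
  rw [nbrs_explicit]
  have hbox : 1 ≤ p.1 ∧ p.1 ≤ (n:ℤ) ∧ 1 ≤ p.2 ∧ p.2 ≤ (m:ℤ) := hp
  obtain ⟨bad, hbad, hbadbox⟩ : ∃ bad, bad ∈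
      ({(p.1+1,p.2),(p.1-1,p.2),(p.1,p.2+1),(p.1,p.2-1)} : Finset (ℤ × ℤ)) ∧
      bad ∉ box n m := by
    rcases hex with h | h | h | h
    · exact ⟨(p.1-1,p.2), by simp [Prod.ext_iff], by rw [mem_box]; omega⟩
    · exact ⟨(p.1+1,p.2), by simp [Prod.ext_iff], by rw [mem_box]; omega⟩
    · exact ⟨(p.1,p.2-1), by simp [Prod.ext_iff], by rw [mem_box]; omega⟩
    · exact ⟨(p.1,p.2+1), by simp [Prod.ext_iff], by rw [mem_box]; omega⟩
  have hsub : ({(p.1+1,p.2),(p.1-1,p.2),(p.1,p.2+1),(p.1,p.2-1)} : Finset (ℤ × ℤ)).filter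
      (· ∈ box n m) ⊆
      (({(p.1+1,p.2),(p.1-1,p.2),(p.1,p.2+1),(p.1,p.2-1)} : Finset (ℤ × ℤ)).erase bad) := by
    intro x hx
    rcases Finset.mem_filter.1 hx with ⟨hx1, hx2⟩
    refine Finset.mem_erase.2 ⟨?_, hx1⟩
    intro hxb
    exact hbadbox (hxb ▸ hx2)
  have h4 : ({(p.1+1,p.2),(p.1-1,p.2),(p.1,p.2+1),(p.1,p.2-1)} : Finset (ℤ × ℤ)).card ≤ 4 := by
    refine le_trans (Finset.card_insert_le _ _) (Nat.succ_le_succ ?_)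
    refine le_trans (Finset.card_insert_le _ _) (Nat.succ_le_succ ?_)
    refine le_trans (Finset.card_insert_le _ _) (Nat.succ_le_succ ?_)
    simp
  have := Finset.card_le_card hsub
  rw [Finset.card_erase_of_mem hbad] at this
  omega

lemma corner_dominator {n m : ℕ} (hn : 4 ≤ n) (hm : 4 ≤ m) {S : Finset (ℤ × ℤ)}
    (hS : IsCDS n m S) (hcor : ∀ c ∈ corners n m, c ∉ S) (c : ℤ × ℤ)
    (hcbox : c ∈ box n m) (hccor : c ∈ corners n m) :
    ∃ u ∈ S, GridZ.Adj u c ∧ u ∈ box n m := by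
  obtain ⟨u, huS, hu⟩ := hS.2.2 c hcbox
  rcases hu with rfl | hadj
  · exact absurd huS (hcor u hccor)
  · exact ⟨u, huS, hadj, hS.1 huS⟩

set_option maxHeartbeats 1000000 in
lemma excess_ge_four {n m : ℕ} (hn : 4 ≤ n) (hm : 4 ≤ m) {S : Finset (ℤ × ℤ)}
    (hS : IsCDS n m S) (hcor : ∀ c ∈ corners n m, c ∉ S) : 4 ≤ excess n m S := by
  have hn' : (4:ℤ) ≤ (n:ℤ) := by exact_mod_cast hn
  have hm' : (4:ℤ) ≤ (m:ℤ) := by exact_mod_cast hm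
  have hb1 : ((1:ℤ),(1:ℤ)) ∈ box n m := by rw [mem_box]; omega
  have hb2 : ((1:ℤ),(m:ℤ)) ∈ box n m := by rw [mem_box]; omega
  have hb3 : ((n:ℤ),(1:ℤ)) ∈ box n m := by rw [mem_box]; omega
  have hb4 : ((n:ℤ),(m:ℤ)) ∈ box n m := by rw [mem_box]; omega
  obtain ⟨u1, hu1S, hu1adj, hu1box⟩ := corner_dominator hn hm hS hcor _ hb1 (by simp [corners])
  obtain ⟨u2, hu2S, hu2adj, hu2box⟩ := corner_dominator hn hm hS hcor _ hb2 (by simp [corners])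
  obtain ⟨u3, hu3S, hu3adj, hu3box⟩ := corner_dominator hn hm hS hcor _ hb3 (by simp [corners])
  obtain ⟨u4, hu4S, hu4adj, hu4box⟩ := corner_dominator hn hm hS hcor _ hb4 (by simp [corners])
  have hx1 : u1 = ((2:ℤ),(1:ℤ)) ∨ u1 = ((1:ℤ),(2:ℤ)) := by
    have hb : 1 ≤ u1.1 ∧ u1.1 ≤ (n:ℤ) ∧ 1 ≤ u1.2 ∧ u1.2 ≤ (m:ℤ) := hu1box
    rcases gridAdj_iff.1 hu1adj with h | h | h | h <;>
      (simp only [Prod.ext_iff, Prod.mk.injEq] at h ⊢; omega)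
  have hx2 : u2 = ((2:ℤ),(m:ℤ)) ∨ u2 = ((1:ℤ),(m:ℤ)-1) := by
    have hb : 1 ≤ u2.1 ∧ u2.1 ≤ (n:ℤ) ∧ 1 ≤ u2.2 ∧ u2.2 ≤ (m:ℤ) := hu2box
    rcases gridAdj_iff.1 hu2adj with h | h | h | h <;>
      (simp only [Prod.ext_iff, Prod.mk.injEq] at h ⊢; omega)
  have hx3 : u3 = ((n:ℤ)-1,(1:ℤ)) ∨ u3 = ((n:ℤ),(2:ℤ)) := by
    have hb : 1 ≤ u3.1 ∧ u3.1 ≤ (n:ℤ) ∧ 1 ≤ u3.2 ∧ u3.2 ≤ (m:ℤ) := hu3box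
    rcases gridAdj_iff.1 hu3adj with h | h | h | h <;>
      (simp only [Prod.ext_iff, Prod.mk.injEq] at h ⊢; omega)
  have hx4 : u4 = ((n:ℤ)-1,(m:ℤ)) ∨ u4 = ((n:ℤ),(m:ℤ)-1) := by
    have hb : 1 ≤ u4.1 ∧ u4.1 ≤ (n:ℤ) ∧ 1 ≤ u4.2 ∧ u4.2 ≤ (m:ℤ) := hu4box
    rcases gridAdj_iff.1 hu4adj with h | h | h | h <;>
      (simp only [Prod.ext_iff, Prod.mk.injEq] at h ⊢; omega)
  -- coordinate bounds
  have c1 : u1.1 ≤ 2 ∧ u1.2 ≤ 2 ∧ (u1.1 = 1 ∨ u1.2 = 1) := by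
    rcases hx1 with rfl | rfl
    · exact ⟨by omega, by omega, Or.inr rfl⟩
    · exact ⟨by omega, by omega, Or.inl rfl⟩
  have c2 : u2.1 ≤ 2 ∧ 3 ≤ u2.2 ∧ (u2.1 = 1 ∨ u2.2 = (m:ℤ)) := by
    rcases hx2 with rfl | rfl
    · exact ⟨by omega, by omega, Or.inr rfl⟩
    · exact ⟨by omega, by omega, Or.inl rfl⟩
  have c3 : 3 ≤ u3.1 ∧ u3.2 ≤ 2 ∧ (u3.1 = (n:ℤ) ∨ u3.2 = 1) := by
    rcases hx3 with rfl | rfl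
    · exact ⟨by omega, by omega, Or.inr rfl⟩
    · exact ⟨by omega, by omega, Or.inl rfl⟩
  have c4 : 3 ≤ u4.1 ∧ 3 ≤ u4.2 ∧ (u4.1 = (n:ℤ) ∨ u4.2 = (m:ℤ)) := by
    rcases hx4 with rfl | rfl
    · exact ⟨by omega, by omega, Or.inr rfl⟩
    · exact ⟨by omega, by omega, Or.inl rfl⟩
  have hbd1 : u1 ∈ boundary n m := boundary_of_extremal hn hm hu1box
    (c1.2.2.elim (fun h => Or.inl h) (fun h => Or.inr (Or.inr (Or.inl h))))
  have hbd2 : u2 ∈ boundary n m := boundary_of_extremal hn hm hu2box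
    (c2.2.2.elim (fun h => Or.inl h) (fun h => Or.inr (Or.inr (Or.inr h))))
  have hbd3 : u3 ∈ boundary n m := boundary_of_extremal hn hm hu3box
    (c3.2.2.elim (fun h => Or.inr (Or.inl h)) (fun h => Or.inr (Or.inr (Or.inl h))))
  have hbd4 : u4 ∈ boundary n m := boundary_of_extremal hn hm hu4box
    (c4.2.2.elim (fun h => Or.inr (Or.inl h)) (fun h => Or.inr (Or.inr (Or.inr h))))
  have hsub : ({u1, u2, u3, u4} : Finset (ℤ × ℤ)) ⊆
      S.filter (fun p => p ∈ boundary n m) := by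
    intro x hx
    rcases Finset.mem_insert.1 hx with rfl | hx
    · exact Finset.mem_filter.2 ⟨hu1S, hbd1⟩
    rcases Finset.mem_insert.1 hx with rfl | hx
    · exact Finset.mem_filter.2 ⟨hu2S, hbd2⟩
    rcases Finset.mem_insert.1 hx with rfl | hx
    · exact Finset.mem_filter.2 ⟨hu3S, hbd3⟩
    rw [Finset.mem_singleton] at hx
    subst hx
    exact Finset.mem_filter.2 ⟨hu4S, hbd4⟩
  have hc4 : ({u1, u2, u3, u4} : Finset (ℤ × ℤ)).card = 4 := by
    rw [Finset.card_insert_of_notMem (by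
        simp only [Finset.mem_insert, Finset.mem_singleton, Prod.ext_iff]
        push_neg
        refine ⟨fun h => ?_, fun h => ?_, fun h => ?_⟩ <;> omega),
      Finset.card_insert_of_notMem (by
        simp only [Finset.mem_insert, Finset.mem_singleton, Prod.ext_iff]
        push_neg
        refine ⟨fun h => ?_, fun h => ?_⟩ <;> omega),
      Finset.card_insert_of_notMem (by
        simp only [Finset.mem_singleton, Prod.ext_iff]
        push_neg
        refine fun h => ?_
        omega),
      Finset.card_singleton]
  have := Finset.card_le_card hsub
  unfold excess
  omega

end Excess

/-- parametrized bound 1. For a connected dominating set `S` of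
`G_{n,m}` with `m, n ≥ 4` and no corner in `S`, `ℓ(S) + e(S) ≥ 2|S| + 2l - 2`. -/
theorem parametrized_bound_one (n m : ℕ) (hn : 4 ≤ n) (hm : 4 ≤ m)
    (S : Finset (ℤ × ℤ)) (hS : IsCDS n m S) (hcor : ∀ c ∈ corners n m, c ∉ S) :
    2 * S.card + 2 * numLeaves S ≤ loss S + excess n m S + 2 := by
  have hconn : ConnOn S := connOn_of_connected hS.2.1
  have hne : S.Nonempty := by
    obtain ⟨⟨x, hx⟩⟩ := hS.2.1.nonempty
    exact ⟨x, Finset.mem_coe.1 hx⟩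
  have h1 := master S.card S rfl hne hconn
  have h2 := excess_ge_four hn hm hS hcor
  omega
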